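/- Let f_n : ℝ → ℝ be defined by f_n(t) = (2n/√π)·exp(−(n t)²) for t ≤ 0 and f_n(t) = 0 for t > 0. Let t₀ ∈ ℝ, e > 0, and let g : ℝ → ℝ be continuously differentiable on [t₀ − e, t₀ + e] with g(t₀) = 0 and g'(t) < 0 for all t ∈ [t₀ − e, t₀ + e]. Then lim_{n→∞} ∫_{t₀−e}^{t₀+e} f_n(g(t)) dt = 1/|g'(t₀)|. -/

import Mathlib

open MeasureTheory Real Filter Topology

/-- One-sided Gaussian approximating sequence for the Dirac-delta-like
distribution `δ*`. -/
noncomputable def f (n : ℕ) (t : ℝ) : ℝ :=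
  if t ≤ 0 then (2 * n / Real.sqrt π) * Real.exp (-(n * t) ^ 2) else 0

theorem stmt_1 (t₀ e : ℝ) (he : 0 < e) (g g' : ℝ → ℝ)
    (hderiv : ∀ t ∈ Set.Icc (t₀ - e) (t₀ + e), HasDerivAt g (g' t) t)
    (hcont : ContinuousOn g' (Set.Icc (t₀ - e) (t₀ + e)))
    (hg0 : g t₀ = 0)
    (hneg : ∀ t ∈ Set.Icc (t₀ - e) (t₀ + e), g' t < 0) :
    Tendsto (fun n : ℕ => ∫ t in (t₀ - e)..(t₀ + e), f n (g t)) atTop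
      (𝓝 (1 / |g' t₀|)) := by
  have ht₀ : t₀ ∈ Set.Icc (t₀ - e) (t₀ + e) := by
    constructor <;> linarith
  -- a uniform negative upper bound for g'
  obtain ⟨x₀, hx₀, hmax⟩ : ∃ x ∈ Set.Icc (t₀ - e) (t₀ + e),
      IsMaxOn g' (Set.Icc (t₀ - e) (t₀ + e)) x :=
    (isCompact_Icc).exists_isMaxOn (Set.nonempty_Icc.mpr (by linarith)) hcont
  set m : ℝ := -g' x₀ with hm_def
  have hm : 0 < m := by simpa [hm_def] using hneg x₀ hx₀
  have hub : ∀ t ∈ Set.Icc (t₀ - e) (t₀ + e), g' t ≤ -m := by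
    intro t ht
    have h2 : g' t ≤ g' x₀ := hmax ht
    simp only [hm_def]; linarith
  have hgc : ContinuousOn g (Set.Icc (t₀ - e) (t₀ + e)) := fun t ht =>
    (hderiv t ht).continuousAt.continuousWithinAt
  -- strict antitonicity of g
  have hanti : StrictAntiOn g (Set.Icc (t₀ - e) (t₀ + e)) := by
    apply strictAntiOn_of_deriv_neg (convex_Icc _ _) hgc
    intro x hx
    rw [interior_Icc] at hx
    rw [(hderiv x (Set.Ioo_subset_Icc_self hx)).deriv]
    exact hneg x (Set.Ioo_subset_Icc_self hx)
  -- the key quantitative bound : g (t₀ + h) ≤ -m * h for h ∈ [0, e]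
  have key : ∀ h ∈ Set.Icc (0:ℝ) e, g (t₀ + h) ≤ -m * h := by
    have hphi : AntitoneOn (fun t => g t + m * t) (Set.Icc (t₀ - e) (t₀ + e)) := by
      apply antitoneOn_of_deriv_nonpos (convex_Icc _ _)
      · exact hgc.add (continuousOn_const.mul continuousOn_id)
      · intro x hx
        rw [interior_Icc] at hx
        exact ((hderiv x (Set.Ioo_subset_Icc_self hx)).add
          ((hasDerivAt_id x).const_mul m)).differentiableAt.differentiableWithinAt
      · intro x hx
        rw [interior_Icc] at hx
        have hD : HasDerivAt (fun t => g t + m * t) (g' x + m) x := by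
          have hD0 := (hderiv x (Set.Ioo_subset_Icc_self hx)).add
            ((hasDerivAt_id x).const_mul m)
          simp only [mul_one] at hD0
          exact hD0
        rw [hD.deriv]
        have := hub x (Set.Ioo_subset_Icc_self hx)
        linarith
    intro h hh
    have h1 : t₀ + h ∈ Set.Icc (t₀ - e) (t₀ + e) := by
      constructor <;> (simp at hh; linarith)
    have := hphi ht₀ h1 (by linarith [hh.1])
    simp only [hg0, zero_add] at this
    linarith
  -- the rescaled integrand and its indicator version
  set ψ : ℕ → ℝ → ℝ := fun n s =>
    (2 / Real.sqrt π) * Real.exp (-((n : ℝ) * g (t₀ + s / n)) ^ 2) with hψ_def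
  set F : ℕ → ℝ → ℝ := fun n => Set.indicator (Set.Ioc 0 ((n : ℝ) * e)) (ψ n) with hF_def
  have hle1 : t₀ - e ≤ t₀ + e := by linarith
  have hle2 : t₀ ≤ t₀ + e := by linarith
  -- Step 1 : rewrite the integral for n ≥ 1
  have heq : ∀ n : ℕ, 1 ≤ n →
      (∫ t in (t₀ - e)..(t₀ + e), f n (g t)) = ∫ s in Set.Ioi (0:ℝ), F n s := by
    intro n hn
    have hn0 : (n : ℝ) ≠ 0 := Nat.cast_ne_zero.mpr (by omega)
    have hnpos : (0:ℝ) < n := by positivity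
    -- A : kill the left half and unfold f on the right half
    have hA : (∫ t in (t₀ - e)..(t₀ + e), f n (g t))
        = ∫ t in t₀..(t₀ + e), (2 * (n:ℝ) / Real.sqrt π) * Real.exp (-((n:ℝ) * g t) ^ 2) := by
      rw [intervalIntegral.integral_of_le hle1, intervalIntegral.integral_of_le hle2]
      have hne : ∀ᵐ t : ℝ, t ≠ t₀ := by
        refine ae_iff.mpr ?_
        simp [Set.setOf_eq_eq_singleton']
      have hae : (fun t => f n (g t))
          =ᵐ[volume.restrict (Set.Ioc (t₀ - e) (t₀ + e))]
          Set.indicator (Set.Ioc t₀ (t₀ + e))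
            (fun t => (2 * (n:ℝ) / Real.sqrt π) * Real.exp (-((n:ℝ) * g t) ^ 2)) := by
        filter_upwards [ae_restrict_mem measurableSet_Ioc, ae_restrict_of_ae hne]
          with t htS htne
        have hmem : t ∈ Set.Icc (t₀ - e) (t₀ + e) := Set.Ioc_subset_Icc_self htS
        rcases lt_or_gt_of_ne htne with hlt | hgt
        · have hpos : 0 < g t := by rw [← hg0]; exact hanti hmem ht₀ hlt
          rw [Set.indicator_of_notMem (by simp only [Set.mem_Ioc, not_and]; intro h; linarith)]
          simp [f, not_le.mpr hpos]
        · have hneg' : g t < 0 := by rw [← hg0]; exact hanti ht₀ hmem hgt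
          rw [Set.indicator_of_mem (Set.mem_Ioc.mpr ⟨hgt, htS.2⟩)]
          simp [f, hneg'.le]
      rw [integral_congr_ae hae, setIntegral_indicator measurableSet_Ioc,
        Set.inter_eq_self_of_subset_right (Set.Ioc_subset_Ioc_left (by linarith))]
    -- B : substitution s = n (t - t₀)
    have hB : (∫ t in t₀..(t₀ + e), (2 * (n:ℝ) / Real.sqrt π) * Real.exp (-((n:ℝ) * g t) ^ 2))
        = ∫ s in (0:ℝ)..((n:ℝ) * e), ψ n s := by
      have h1 : ∫ s in (0:ℝ)..((n:ℝ) * e), ψ n s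
          = (n:ℝ)⁻¹ • ∫ s in (0:ℝ)..((n:ℝ) * e),
              (fun t => (2 * (n:ℝ) / Real.sqrt π) * Real.exp (-((n:ℝ) * g t) ^ 2))
                ((n:ℝ)⁻¹ * s + t₀) := by
        rw [← intervalIntegral.integral_smul]
        apply intervalIntegral.integral_congr
        intro s _
        have harg : (n:ℝ)⁻¹ * s + t₀ = t₀ + s / (n:ℝ) := by field_simp; ring
        simp only [hψ_def, harg, smul_eq_mul]
        field_simp
      have h2 := intervalIntegral.integral_comp_mul_add
        (f := fun t => (2 * (n:ℝ) / Real.sqrt π) * Real.exp (-((n:ℝ) * g t) ^ 2))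
        (a := 0) (b := (n:ℝ) * e) (inv_ne_zero hn0) t₀
      rw [h1, h2, smul_smul, inv_inv, inv_mul_cancel₀ hn0, one_smul]
      rw [show (n:ℝ)⁻¹ * 0 + t₀ = t₀ by ring,
        show (n:ℝ)⁻¹ * ((n:ℝ) * e) + t₀ = t₀ + e by field_simp; ring]
    -- C : to a set integral over Ioi 0
    have hC : (∫ s in (0:ℝ)..((n:ℝ) * e), ψ n s) = ∫ s in Set.Ioi (0:ℝ), F n s := by
      rw [intervalIntegral.integral_of_le (by positivity : (0:ℝ) ≤ (n:ℝ) * e), hF_def]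
      rw [setIntegral_indicator measurableSet_Ioc,
        Set.inter_eq_self_of_subset_right Set.Ioc_subset_Ioi_self]
    rw [hA, hB, hC]
  -- Step 2 : dominated convergence
  have hb2 : (0:ℝ) < m ^ 2 := by positivity
  have hbound_int : Integrable (fun s : ℝ => (2 / Real.sqrt π) * Real.exp (-(m ^ 2) * s ^ 2))
      (volume.restrict (Set.Ioi (0:ℝ))) :=
    ((integrable_exp_neg_mul_sq hb2).restrict).const_mul _
  have hFmeas : ∀ n : ℕ, AEStronglyMeasurable (F n) (volume.restrict (Set.Ioi (0:ℝ))) := by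
    intro n
    rcases Nat.eq_zero_or_pos n with rfl | hn
    · have : F 0 = fun _ => 0 := by
        funext s
        simp [hF_def]
      rw [this]; exact aestronglyMeasurable_const
    · have hnpos : (0:ℝ) < n := by exact_mod_cast hn
      have hcontψ : ContinuousOn (ψ n) (Set.Ioc 0 ((n:ℝ) * e)) := by
        intro s hs
        have hsmem : t₀ + s / n ∈ Set.Icc (t₀ - e) (t₀ + e) := by
          have h1 : 0 < s / (n:ℝ) := div_pos hs.1 hnpos
          have h2 : s / (n:ℝ) ≤ e := by
            rw [div_le_iff₀ hnpos]; nlinarith [hs.2]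
          constructor <;> linarith
        have hgat : ContinuousAt g (t₀ + s / n) := (hderiv _ hsmem).continuousAt
        have : ContinuousAt (ψ n) s := by
          apply ContinuousAt.mul continuousAt_const
          apply Real.continuous_exp.continuousAt.comp
          apply ContinuousAt.neg
          apply ContinuousAt.pow
          apply ContinuousAt.mul continuousAt_const
          have hc : ContinuousAt (fun x : ℝ => t₀ + x / (n:ℝ)) s := by fun_prop
          exact ContinuousAt.comp hgat hc
        exact this.continuousWithinAt
      rw [hF_def]
      apply (aestronglyMeasurable_indicator_iff measurableSet_Ioc).mpr
      have hm1 := hcontψ.aestronglyMeasurable (μ := volume) measurableSet_Ioc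
      rwa [Measure.restrict_restrict measurableSet_Ioc,
        Set.inter_eq_self_of_subset_left Set.Ioc_subset_Ioi_self]
  have h_bound : ∀ n : ℕ, ∀ᵐ s ∂(volume.restrict (Set.Ioi (0:ℝ))),
      ‖F n s‖ ≤ (2 / Real.sqrt π) * Real.exp (-(m ^ 2) * s ^ 2) := by
    intro n
    refine ae_of_all _ fun s => ?_
    by_cases hs : s ∈ Set.Ioc 0 ((n:ℝ) * e)
    · have hnpos : (0:ℝ) < n := by
        by_contra h
        push_neg at h
        have : (n:ℝ) * e ≤ 0 := mul_nonpos_of_nonpos_of_nonneg h he.le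
        linarith [hs.1, hs.2]
      have hh : s / (n:ℝ) ∈ Set.Icc (0:ℝ) e := by
        constructor
        · exact div_nonneg hs.1.le hnpos.le
        · rw [div_le_iff₀ hnpos]; nlinarith [hs.2]
      have hkey := key _ hh
      have hns : (n:ℝ) * (s / (n:ℝ)) = s := by field_simp
      have hprod : (n:ℝ) * g (t₀ + s / n) ≤ -(m * s) := by
        calc (n:ℝ) * g (t₀ + s / n) ≤ (n:ℝ) * (-m * (s / n)) := by
              apply mul_le_mul_of_nonneg_left hkey hnpos.le
          _ = -(m * s) := by field_simp
      have hsq : m ^ 2 * s ^ 2 ≤ ((n:ℝ) * g (t₀ + s / n)) ^ 2 := by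
        have h1 : m * s ≤ -((n:ℝ) * g (t₀ + s / n)) := by linarith
        have h2 : (0:ℝ) ≤ m * s := (mul_pos hm hs.1).le
        calc m ^ 2 * s ^ 2 = (m * s) ^ 2 := by ring
          _ ≤ (-((n:ℝ) * g (t₀ + s / n))) ^ 2 := pow_le_pow_left₀ h2 h1 2
          _ = ((n:ℝ) * g (t₀ + s / n)) ^ 2 := by ring
      have hFs : F n s = ψ n s := by rw [hF_def]; exact Set.indicator_of_mem hs _
      rw [hFs, hψ_def]
      rw [Real.norm_eq_abs, abs_of_nonneg (by positivity)]
      apply mul_le_mul_of_nonneg_left _ (by positivity)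
      apply Real.exp_le_exp.mpr
      linarith
    · have hFs : F n s = 0 := by rw [hF_def]; exact Set.indicator_of_notMem hs _
      rw [hFs, norm_zero]
      positivity
  have h_lim : ∀ᵐ s ∂(volume.restrict (Set.Ioi (0:ℝ))),
      Tendsto (fun n : ℕ => F n s) atTop
        (𝓝 ((2 / Real.sqrt π) * Real.exp (-(g' t₀) ^ 2 * s ^ 2))) := by
    filter_upwards [ae_restrict_mem measurableSet_Ioi] with s hs
    have hs0 : 0 < s := hs
    have hslope : Tendsto (slope g t₀) (𝓝[≠] t₀) (𝓝 (g' t₀)) :=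
      hasDerivAt_iff_tendsto_slope.mp (hderiv t₀ ht₀)
    have harg : Tendsto (fun n : ℕ => t₀ + s / n) atTop (𝓝[≠] t₀) := by
      rw [tendsto_nhdsWithin_iff]
      constructor
      · have h0 := tendsto_const_div_atTop_nhds_zero_nat s
        simpa using tendsto_const_nhds.add h0
      · filter_upwards [eventually_ge_atTop 1] with n hn
        have hnpos : (0:ℝ) < n := by exact_mod_cast hn
        have : 0 < s / (n:ℝ) := div_pos hs0 hnpos
        simp only [Set.mem_compl_iff, Set.mem_singleton_iff]
        intro h
        nlinarith [h]
    have hX : Tendsto (fun n : ℕ => s * slope g t₀ (t₀ + s / n)) atTop (𝓝 (s * g' t₀)) :=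
      tendsto_const_nhds.mul (hslope.comp harg)
    have hT : Tendsto
        (fun n : ℕ => (2 / Real.sqrt π) * Real.exp (-(s * slope g t₀ (t₀ + s / n)) ^ 2))
        atTop (𝓝 ((2 / Real.sqrt π) * Real.exp (-(s * g' t₀) ^ 2))) :=
      tendsto_const_nhds.mul (Real.continuous_exp.continuousAt.tendsto.comp ((hX.pow 2).neg))
    rw [show -(s * g' t₀) ^ 2 = -(g' t₀) ^ 2 * s ^ 2 by ring] at hT
    refine Tendsto.congr' ?_ hT
    have h1 : ∀ᶠ n : ℕ in atTop, s ≤ (n:ℝ) * e :=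
      (Tendsto.atTop_mul_const he tendsto_natCast_atTop_atTop).eventually_ge_atTop s
    filter_upwards [h1, eventually_ge_atTop 1] with n hn1 hn2
    have hnpos : (0:ℝ) < n := by exact_mod_cast hn2
    have hn0 : (n:ℝ) ≠ 0 := hnpos.ne'
    have hslope_eq : s * slope g t₀ (t₀ + s / n) = (n:ℝ) * g (t₀ + s / n) := by
      rw [slope_def_field, hg0, sub_zero, add_sub_cancel_left]
      rw [div_div_eq_mul_div, mul_comm]
      field_simp
    rw [hslope_eq]
    exact (Set.indicator_of_mem (Set.mem_Ioc.mpr ⟨hs0, hn1⟩) (ψ n)).symm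
  have hDCT := tendsto_integral_of_dominated_convergence _ hFmeas hbound_int h_bound h_lim
  have hg'0 : g' t₀ < 0 := hneg t₀ ht₀
  have hval : (∫ s in Set.Ioi (0:ℝ), (2 / Real.sqrt π) * Real.exp (-(g' t₀) ^ 2 * s ^ 2))
      = 1 / |g' t₀| := by
    rw [MeasureTheory.integral_const_mul, integral_gaussian_Ioi,
      Real.sqrt_div pi_pos.le, Real.sqrt_sq_eq_abs]
    have hsp : Real.sqrt π ≠ 0 := ne_of_gt (Real.sqrt_pos.mpr pi_pos)
    have habs : |g' t₀| ≠ 0 := abs_ne_zero.mpr hg'0.ne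
    field_simp
  rw [← hval]
  apply hDCT.congr'
  filter_upwards [eventually_ge_atTop 1] with n hn
  exact (heq n hn).symm
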